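/- The truncated variation is almost subadditive over time intervals: for any function x : [0,∞) → ℝ, any c ≥ 0 and any 0 ≤ s < t < u, TV^c(x,[s,u]) ≤ TV^c(x,[s,t]) + TV^c(x,[t,u]) + c. -/

import Mathlib

open scoped ENNReal

/-- The truncated variation of `x` with truncation parameter `c` on `[s,t]`:
the supremum over finite partitions `s = u₀ ≤ u₁ ≤ ... ≤ uₙ = t` of
`Σᵢ max(|x(uᵢ₊₁) − x(uᵢ)| − c, 0)`. -/
noncomputable def truncVar (x : ℝ → ℝ) (c s t : ℝ) : ℝ≥0∞ :=
  ⨆ (n : ℕ) (u : Fin (n + 1) → ℝ) (_ : Monotone u) (_ : u 0 = s)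
    (_ : u (Fin.last n) = t),
    ∑ i : Fin n, ENNReal.ofReal (|x (u i.succ) - x (u i.castSucc)| - c)

/-- Superadditivity of the truncated variation over time intervals. -/
theorem truncVar_almost_subadditive (x : ℝ → ℝ) (c s t u : ℝ) (hc : 0 ≤ c)
    (hs : 0 ≤ s) (hst : s < t) (htu : t < u) :
    truncVar x c s u ≤ truncVar x c s t + truncVar x c t u + ENNReal.ofReal c := by
  rw [truncVar]
  refine iSup_le fun n => iSup_le fun v => iSup_le fun hm => iSup_le fun h0 =>
    iSup_le fun hl => ?_
  -- Extend the partition to a monotone function on ℕ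
  set V : ℕ → ℝ := fun i => v ⟨min i n, by omega⟩ with hVdef
  have hVmono : Monotone V := fun i j hij => hm (by simp [Fin.mk_le_mk]; omega)
  have hV0 : V 0 = s := by
    have : (⟨min 0 n, by omega⟩ : Fin (n+1)) = 0 := by simp [Fin.ext_iff]
    simp only [hVdef, this, h0]
  have hVn : V n = u := by
    have : (⟨min n n, by omega⟩ : Fin (n+1)) = Fin.last n := by simp [Fin.ext_iff]
    simp only [hVdef, this, hl]
  have hVeq : ∀ i : ℕ, ∀ hi : i ≤ n, V i = v ⟨i, by omega⟩ := by
    intro i hi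
    simp only [hVdef]
    congr 1
    simp [Fin.ext_iff, Nat.min_eq_left hi]
  -- the increments
  set g : ℕ → ℝ≥0∞ := fun i => ENNReal.ofReal (|x (V (i+1)) - x (V i)| - c) with hgdef
  -- the original sum in terms of g
  have hsum : ∑ i : Fin n, ENNReal.ofReal (|x (v i.succ) - x (v i.castSucc)| - c)
      = ∑ i ∈ Finset.range n, g i := by
    rw [← Fin.sum_univ_eq_sum_range g n]
    refine Finset.sum_congr rfl fun i _ => ?_
    have h1 : V (↑i + 1) = v i.succ := by
      rw [hVeq _ (by omega)]; congr 1
    have h2 : V (↑i : ℕ) = v i.castSucc := by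
      rw [hVeq _ (by omega)]; congr 1
    simp [hgdef, h1, h2]
  rw [hsum]
  -- find the splitting index
  set k : ℕ := Nat.findGreatest (fun i => V i ≤ t) n with hkdef
  have hkle : k ≤ n := Nat.findGreatest_le n
  have hVk : V k ≤ t := Nat.findGreatest_spec (P := fun i => V i ≤ t) (Nat.zero_le n) (by show V 0 ≤ t; rw [hV0]; exact hst.le)
  have hkn : k < n := by
    rcases eq_or_lt_of_le hkle with h | h
    · exfalso; rw [h] at hVk; rw [hVn] at hVk; linarith
    · exact h
  have hVk1 : t ≤ V (k + 1) := by
    have := Nat.findGreatest_is_greatest (k := k + 1) (P := fun i => V i ≤ t) (n := n)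
      (by omega) (by omega)
    simpa using le_of_not_ge this
  -- first partition: of [s, t], with k+1 intervals
  set w : Fin (k + 2) → ℝ := fun i => if (i : ℕ) ≤ k then V i else t with hwdef
  have hwm : Monotone w := by
    intro i j hij
    have hij' : (i : ℕ) ≤ (j : ℕ) := hij
    simp only [hwdef]
    by_cases hi : (i : ℕ) ≤ k <;> by_cases hj : (j : ℕ) ≤ k <;> simp [hi, hj]
    · exact hVmono hij'
    · exact le_trans (hVmono (by omega : (i : ℕ) ≤ k)) hVk
    · omega
  have hw0 : w 0 = s := by simp [hwdef, hV0]
  have hwl : w (Fin.last (k + 1)) = t := by simp [hwdef]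
  have hwsum : ∑ i : Fin (k + 1), ENNReal.ofReal (|x (w i.succ) - x (w i.castSucc)| - c)
      = ∑ i ∈ Finset.range k, g i + ENNReal.ofReal (|x t - x (V k)| - c) := by
    have : ∀ i : Fin (k + 1),
        ENNReal.ofReal (|x (w i.succ) - x (w i.castSucc)| - c)
        = (fun j : ℕ => ENNReal.ofReal (|x (if j + 1 ≤ k then V (j+1) else t)
            - x (V j)| - c)) (i : ℕ) := by
      intro i
      have hi : (i : ℕ) ≤ k := by omega
      simp [hwdef, Fin.val_succ, Fin.coe_castSucc, hi]
    rw [Finset.sum_congr rfl (fun i _ => this i),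
      Fin.sum_univ_eq_sum_range (fun j : ℕ => ENNReal.ofReal (|x (if j + 1 ≤ k then V (j+1)
        else t) - x (V j)| - c)) (k + 1),
      Finset.sum_range_succ]
    congr 1
    · refine Finset.sum_congr rfl fun i hi => ?_
      simp only [Finset.mem_range] at hi
      simp [hgdef, Nat.succ_le_of_lt hi]
    · simp
  -- second partition: of [t, u], with n - k intervals
  set z : Fin (n - k + 1) → ℝ := fun i => if (i : ℕ) = 0 then t else V (k + i) with hzdef
  have hzm : Monotone z := by
    intro i j hij
    have hij' : (i : ℕ) ≤ (j : ℕ) := hij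
    simp only [hzdef]
    by_cases hi : (i : ℕ) = 0 <;> by_cases hj : (j : ℕ) = 0 <;> simp [hi, hj]
    · exact le_trans hVk1 (hVmono (by omega : k + 1 ≤ k + (j : ℕ)))
    · omega
    · exact hVmono (by omega)
  have hz0 : z 0 = t := by simp [hzdef]
  have hzl : z (Fin.last (n - k)) = u := by
    have : (Fin.last (n - k) : ℕ) = n - k := rfl
    simp only [hzdef, this]
    rw [if_neg (by omega)]
    rw [show k + (n - k) = n by omega, hVn]
  have hzsum : ∑ i : Fin (n - k), ENNReal.ofReal (|x (z i.succ) - x (z i.castSucc)| - c)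
      = ENNReal.ofReal (|x (V (k + 1)) - x t| - c)
        + ∑ i ∈ Finset.range (n - (k + 1)), g (k + 1 + i) := by
    have : ∀ i : Fin (n - k),
        ENNReal.ofReal (|x (z i.succ) - x (z i.castSucc)| - c)
        = (fun j : ℕ => ENNReal.ofReal (|x (V (k + (j + 1)))
            - x (if j = 0 then t else V (k + j))| - c)) (i : ℕ) := by
      intro i
      simp [hzdef, Fin.val_succ, Fin.coe_castSucc]
      have hc0 : (i.castSucc = 0) ↔ ((i : ℕ) = 0) := by rw [Fin.ext_iff]; simp
      simp only [hc0]
    rw [Finset.sum_congr rfl (fun i _ => this i),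
      Fin.sum_univ_eq_sum_range (fun j : ℕ => ENNReal.ofReal (|x (V (k + (j + 1)))
        - x (if j = 0 then t else V (k + j))| - c)) (n - k)]
    rw [show n - k = (n - (k + 1)) + 1 by omega, Finset.sum_range_succ']
    rw [add_comm]
    congr 1
    · refine Finset.sum_congr rfl fun i hi => ?_
      have e1 : k + (i + 1 + 1) = k + 1 + i + 1 := by omega
      have e2 : k + (i + 1) = k + 1 + i := by omega
      simp only [if_neg (Nat.succ_ne_zero i), e1, e2, hgdef]
  -- elementary inequality for the straddling increment
  have hkey : g k ≤ ENNReal.ofReal (|x t - x (V k)| - c)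
      + ENNReal.ofReal (|x (V (k + 1)) - x t| - c) + ENNReal.ofReal c := by
    have htri : |x (V (k+1)) - x (V k)| ≤ |x (V (k+1)) - x t| + |x t - x (V k)| :=
      abs_sub_le _ _ _
    calc g k ≤ ENNReal.ofReal ((|x t - x (V k)| - c)
          + ((|x (V (k + 1)) - x t| - c) + c)) := by
          apply ENNReal.ofReal_le_ofReal; linarith
      _ ≤ ENNReal.ofReal (|x t - x (V k)| - c)
          + ENNReal.ofReal ((|x (V (k + 1)) - x t| - c) + c) := ENNReal.ofReal_add_le
      _ ≤ _ := by
          rw [add_assoc]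
          exact add_le_add_right ENNReal.ofReal_add_le _
  -- split the original sum
  have hsplit : ∑ i ∈ Finset.range n, g i
      = (∑ i ∈ Finset.range k, g i + g k) + ∑ i ∈ Finset.range (n - (k + 1)), g (k + 1 + i) := by
    have h := Finset.sum_range_add g (k + 1) (n - (k + 1))
    rw [show (k + 1) + (n - (k + 1)) = n by omega] at h
    rw [h, Finset.sum_range_succ]
  -- bounds by the two truncated variations
  have hA : ∑ i ∈ Finset.range k, g i + ENNReal.ofReal (|x t - x (V k)| - c)
      ≤ truncVar x c s t := by
    rw [← hwsum, truncVar]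
    exact le_iSup_of_le (k + 1) (le_iSup_of_le w (le_iSup_of_le hwm
      (le_iSup_of_le hw0 (le_iSup_of_le hwl le_rfl))))
  have hB : ENNReal.ofReal (|x (V (k + 1)) - x t| - c)
      + ∑ i ∈ Finset.range (n - (k + 1)), g (k + 1 + i) ≤ truncVar x c t u := by
    rw [← hzsum, truncVar]
    exact le_iSup_of_le (n - k) (le_iSup_of_le z (le_iSup_of_le hzm
      (le_iSup_of_le hz0 (le_iSup_of_le hzl le_rfl))))
  calc ∑ i ∈ Finset.range n, g i
      = (∑ i ∈ Finset.range k, g i + g k)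
        + ∑ i ∈ Finset.range (n - (k + 1)), g (k + 1 + i) := hsplit
    _ ≤ (∑ i ∈ Finset.range k, g i
          + (ENNReal.ofReal (|x t - x (V k)| - c)
            + ENNReal.ofReal (|x (V (k + 1)) - x t| - c) + ENNReal.ofReal c))
        + ∑ i ∈ Finset.range (n - (k + 1)), g (k + 1 + i) :=
        add_le_add_left (add_le_add_right hkey _) _
    _ = (∑ i ∈ Finset.range k, g i + ENNReal.ofReal (|x t - x (V k)| - c))
        + (ENNReal.ofReal (|x (V (k + 1)) - x t| - c)
          + ∑ i ∈ Finset.range (n - (k + 1)), g (k + 1 + i)) + ENNReal.ofReal c := by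
        ring
    _ ≤ truncVar x c s t + truncVar x c t u + ENNReal.ofReal c :=
        add_le_add_left (add_le_add hA hB) _
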